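/- Let C be a binary linear [k+1, k] code with systematic generator matrix G = [I_k | A] (so t = 1), and let a_1 = #{i : g^i_I = 1}. Then M(C) = k + C(a_1, 2), where C(a_1, 2) = a_1(a_1 - 1)/2. -/

import Mathlib

open Finset

/-- The support of a vector `x ∈ F_2^n`: the set of nonzero coordinates. -/
def supp {n : ℕ} (x : Fin n → ZMod 2) : Set (Fin n) := {i | x i ≠ 0}

/-- `c` is a minimal codeword of the linear code (subspace) `C ≤ F_2^n`:
it is a nonzero codeword and no nonzero codeword has support properly contained in `supp c`. -/
def IsMinimal {n : ℕ} (C : Submodule (ZMod 2) (Fin n → ZMod 2)) (c : Fin n → ZMod 2) : Prop :=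
  c ∈ C ∧ c ≠ 0 ∧ ∀ c' ∈ C, c' ≠ 0 → ¬ supp c' ⊂ supp c

/-- `M(C)`: the number of minimal codewords of `C`. -/
noncomputable def Mcode {n : ℕ} (C : Submodule (ZMod 2) (Fin n → ZMod 2)) : ℕ :=
  Set.ncard {c | IsMinimal C c}

/-- The `i`-th row `g^i` of the systematic generator matrix `G = [I_k | A]`. -/
def row {k t : ℕ} (A : Fin k → Fin t → ZMod 2) (i : Fin k) : Fin (k + t) → ZMod 2 :=
  Fin.append (Pi.single i 1) (A i)

/-- The binary linear `[k+t, k]` code with systematic generator matrix `G = [I_k | A]`. -/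
def genCode {k t : ℕ} (A : Fin k → Fin t → ZMod 2) :
    Submodule (ZMod 2) (Fin (k + t) → ZMod 2) :=
  Submodule.span (ZMod 2) (Set.range (row A))

/-- `c^S = ∑_{i ∈ S} g^i`. -/
def cS {k t : ℕ} (A : Fin k → Fin t → ZMod 2) (S : Finset (Fin k)) : Fin (k + t) → ZMod 2 :=
  ∑ i ∈ S, row A i

/-- `c_I`: the restriction of a codeword to its last `t` coordinates (the information bits). -/
def infoBits {k t : ℕ} (c : Fin (k + t) → ZMod 2) : Fin t → ZMod 2 :=
  fun j => c (Fin.natAdd k j)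

/-- `a_τ(A)` : the number of indices `i` with `g^i_I = A i = τ`. -/
def aCount {k t : ℕ} (A : Fin k → Fin t → ZMod 2) (τ : Fin t → ZMod 2) : ℕ :=
  (Finset.univ.filter fun i => A i = τ).card

/-- `M_2(n, k)`: the maximum of `M(C)` over all binary linear `[n, k]` codes `C`. -/
noncomputable def M2 (n k : ℕ) : ℕ :=
  sSup {m | ∃ C : Submodule (ZMod 2) (Fin n → ZMod 2),
    Module.finrank (ZMod 2) C = k ∧ Mcode C = m}


section AUX
variable {k t : ℕ} (A : Fin k → Fin t → ZMod 2)

lemma zmod2_cases (a : ZMod 2) : a = 0 ∨ a = 1 := by revert a; decide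

lemma cS_castAdd (S : Finset (Fin k)) (j : Fin k) :
    cS A S (Fin.castAdd t j) = if j ∈ S then 1 else 0 := by
  simp [cS, row, Finset.sum_apply, Fin.append_left, Pi.single_apply, Finset.sum_ite_eq]

lemma cS_natAdd (S : Finset (Fin k)) (j : Fin t) :
    cS A S (Fin.natAdd k j) = ∑ i ∈ S, A i j := by
  simp [cS, row, Finset.sum_apply, Fin.append_right]

lemma mem_genCode_iff (c : Fin (k + t) → ZMod 2) :
    c ∈ genCode A ↔ ∃ S, c = cS A S := by
  constructor
  · intro hc
    obtain ⟨f, hf⟩ := (Submodule.mem_span_range_iff_exists_fun _).mp hc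
    refine ⟨univ.filter (fun i => f i = 1), ?_⟩
    rw [← hf, cS, Finset.sum_filter]
    refine Finset.sum_congr rfl fun i _ => ?_
    rcases zmod2_cases (f i) with h | h <;> simp [h]
  · rintro ⟨S, rfl⟩
    exact Submodule.sum_mem _ fun i _ => Submodule.subset_span ⟨i, rfl⟩

lemma cS_inj : Function.Injective (cS A) := by
  intro S S' h
  ext j
  have := congrFun h (Fin.castAdd t j)
  rw [cS_castAdd, cS_castAdd] at this
  constructor <;> intro hj <;> by_contra hj' <;> simp [hj, hj'] at this

lemma cS_empty : cS A (∅ : Finset (Fin k)) = 0 := by simp [cS]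

lemma cS_eq_zero_iff (S : Finset (Fin k)) : cS A S = 0 ↔ S = ∅ := by
  constructor
  · intro h; exact cS_inj A (h.trans (cS_empty A).symm)
  · rintro rfl; exact cS_empty A
end AUX

section T1
variable {k : ℕ} (A : Fin k → Fin 1 → ZMod 2)

def sig (S : Finset (Fin k)) : ZMod 2 := ∑ i ∈ S, A i 0

lemma mem_supp_castAdd (S : Finset (Fin k)) (j : Fin k) :
    Fin.castAdd 1 j ∈ supp (cS A S) ↔ j ∈ S := by
  simp only [supp, Set.mem_setOf_eq, cS_castAdd]
  split_ifs with h <;> simp [h]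

lemma mem_supp_natAdd (S : Finset (Fin k)) (j : Fin 1) :
    Fin.natAdd k j ∈ supp (cS A S) ↔ sig A S ≠ 0 := by
  have : j = 0 := Subsingleton.elim _ _
  subst this
  simp only [supp, Set.mem_setOf_eq, cS_natAdd, sig]

lemma supp_subset_iff (S S' : Finset (Fin k)) :
    supp (cS A S') ⊆ supp (cS A S) ↔ S' ⊆ S ∧ (sig A S' ≠ 0 → sig A S ≠ 0) := by
  constructor
  · intro h
    refine ⟨fun j hj => (mem_supp_castAdd A S j).mp (h ((mem_supp_castAdd A S' j).mpr hj)),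
      fun h' => (mem_supp_natAdd A S 0).mp (h ((mem_supp_natAdd A S' 0).mpr h'))⟩
  · rintro ⟨h1, h2⟩ x hx
    induction x using Fin.addCases with
    | left j => exact (mem_supp_castAdd A S j).mpr (h1 ((mem_supp_castAdd A S' j).mp hx))
    | right j => exact (mem_supp_natAdd A S j).mpr (h2 ((mem_supp_natAdd A S' j).mp hx))

lemma sig_ones (S : Finset (Fin k)) (hcard : S.card = 2) (hone : ∀ i ∈ S, A i 0 = 1) :
    sig A S = 0 := by
  unfold sig
  rw [Finset.sum_congr rfl hone, Finset.sum_const, hcard]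
  decide

lemma isMinimal_iff (S : Finset (Fin k)) (hS : S.Nonempty) :
    IsMinimal (genCode A) (cS A S) ↔
      (S.card = 1 ∨ (S.card = 2 ∧ ∀ i ∈ S, A i 0 = 1)) := by
  constructor
  · intro hmin
    by_contra hP
    push_neg at hP
    obtain ⟨h1, h2⟩ := hP
    have hcard : 1 < S.card := lt_of_le_of_ne (Finset.card_pos.mpr hS) (Ne.symm h1)
    by_cases hz : ∃ i ∈ S, A i 0 = 0
    · obtain ⟨i, hi, hAi⟩ := hz
      obtain ⟨j, hj, hji⟩ := Finset.exists_mem_ne hcard i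
      refine hmin.2.2 (cS A {i}) ((mem_genCode_iff A _).mpr ⟨_, rfl⟩)
        (by rw [Ne, cS_eq_zero_iff]; simp) ?_
      rw [Set.ssubset_iff_subset_ne]
      constructor
      · rw [supp_subset_iff]
        refine ⟨Finset.singleton_subset_iff.mpr hi, fun h => ?_⟩
        exact absurd (by simp [sig, hAi]) h
      · intro hEq
        have := (mem_supp_castAdd A S j).mpr hj
        rw [← hEq, mem_supp_castAdd] at this
        exact hji (Finset.mem_singleton.mp this)
    · push_neg at hz
      have hone : ∀ i ∈ S, A i 0 = 1 := fun i hi =>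
        (zmod2_cases (A i 0)).resolve_left (hz i hi)
      have h3 : 2 < S.card := by
        rcases lt_or_eq_of_le (Nat.succ_le_of_lt hcard) with h | h
        · exact h
        · exact absurd hone (by obtain ⟨i, hi, hAi⟩ := h2 h.symm; exact fun hh => hAi (hh i hi))
      obtain ⟨i, hi⟩ := hS
      obtain ⟨j, hj, hji⟩ := Finset.exists_mem_ne hcard i
      have hpair : ({j, i} : Finset (Fin k)) ⊆ S := by
        intro x hx; rcases Finset.mem_insert.mp hx with rfl | hx
        · exact hj
        · rw [Finset.mem_singleton.mp hx]; exact hi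
      have hsigpair : sig A {j, i} = 0 :=
        sig_ones A _ (Finset.card_pair hji) (fun x hx => hone x (hpair hx))
      refine hmin.2.2 (cS A {j, i}) ((mem_genCode_iff A _).mpr ⟨_, rfl⟩)
        (by rw [Ne, cS_eq_zero_iff]; simp) ?_
      have hssub : ({j, i} : Finset (Fin k)) ⊂ S := by
        rw [Finset.ssubset_iff_subset_ne]
        refine ⟨hpair, fun h => ?_⟩
        rw [← h, Finset.card_pair hji] at h3
        omega
      obtain ⟨l, hl, hlp⟩ := Finset.exists_of_ssubset hssub
      rw [Set.ssubset_iff_subset_ne]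
      constructor
      · rw [supp_subset_iff]
        exact ⟨hpair, fun h => absurd hsigpair h⟩
      · intro hEq
        have := (mem_supp_castAdd A S l).mpr hl
        rw [← hEq, mem_supp_castAdd] at this
        exact hlp this
  · intro hP
    refine ⟨(mem_genCode_iff A _).mpr ⟨S, rfl⟩,
      by rw [Ne, cS_eq_zero_iff]; exact hS.ne_empty, ?_⟩
    intro c' hc' hne hsub
    obtain ⟨S', rfl⟩ := (mem_genCode_iff A _).mp hc'
    have hS' : S' ≠ ∅ := by rwa [Ne, ← cS_eq_zero_iff A]
    obtain ⟨hSS, hsg⟩ := (supp_subset_iff A S S').mp hsub.subset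
    have hne' : S' ≠ S := by
      rintro rfl; exact hsub.ne rfl
    have hlt : S'.card < S.card := Finset.card_lt_card (Finset.ssubset_iff_subset_ne.mpr ⟨hSS, hne'⟩)
    rcases hP with h1 | ⟨h2, hone⟩
    · rw [h1] at hlt
      have := Finset.card_pos.mpr (Finset.nonempty_of_ne_empty hS')
      omega
    · rw [h2] at hlt
      have hpos := Finset.card_pos.mpr (Finset.nonempty_of_ne_empty hS')
      have h1' : S'.card = 1 := by omega
      obtain ⟨i, rfl⟩ := Finset.card_eq_one.mp h1'
      have : sig A {i} = 1 := by
        simp [sig, hone i (hSS (Finset.mem_singleton_self i))]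
      exact (hsg (by rw [this]; decide)) (sig_ones A S h2 hone)
end T1


theorem stmt7 (k : ℕ) (A : Fin k → Fin 1 → ZMod 2) :
    Mcode (genCode A) = k + (aCount A 1).choose 2 := by
  classical
  set T : Finset (Fin k) := univ.filter (fun i => A i 0 = 1) with hT
  set SS : Finset (Finset (Fin k)) :=
    (univ.image fun i : Fin k => ({i} : Finset (Fin k))) ∪ T.powersetCard 2 with hSS
  have hset : {c | IsMinimal (genCode A) c} = ↑(SS.image (cS A)) := by
    ext c
    simp only [Set.mem_setOf_eq, Finset.coe_image, Set.mem_image, Finset.mem_coe]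
    constructor
    · intro hmin
      obtain ⟨S, rfl⟩ := (mem_genCode_iff A c).mp hmin.1
      have hSne : S.Nonempty :=
        Finset.nonempty_of_ne_empty (by rw [Ne, ← cS_eq_zero_iff A]; exact hmin.2.1)
      refine ⟨S, ?_, rfl⟩
      rcases (isMinimal_iff A S hSne).mp hmin with h1 | ⟨h2, hone⟩
      · obtain ⟨i, rfl⟩ := Finset.card_eq_one.mp h1
        exact Finset.mem_union_left _ (Finset.mem_image.mpr ⟨i, Finset.mem_univ i, rfl⟩)
      · exact Finset.mem_union_right _ (Finset.mem_powersetCard.mpr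
          ⟨fun x hx => by simp only [hT, Finset.mem_filter]; exact ⟨Finset.mem_univ x, hone x hx⟩, h2⟩)
    · rintro ⟨S, hmem, rfl⟩
      rcases Finset.mem_union.mp hmem with h | h
      · obtain ⟨i, _, rfl⟩ := Finset.mem_image.mp h
        exact (isMinimal_iff A _ (Finset.singleton_nonempty i)).mpr (Or.inl (Finset.card_singleton i))
      · obtain ⟨hsub, hcard⟩ := Finset.mem_powersetCard.mp h
        have hSne : S.Nonempty := Finset.card_pos.mp (by omega)
        refine (isMinimal_iff A S hSne).mpr (Or.inr ⟨hcard, fun i hi => ?_⟩)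
        have := hsub hi
        rw [hT, Finset.mem_filter] at this
        exact this.2
  have hdisj : Disjoint (univ.image fun i : Fin k => ({i} : Finset (Fin k))) (T.powersetCard 2) := by
    rw [Finset.disjoint_left]
    intro S h1 h2
    obtain ⟨i, _, rfl⟩ := Finset.mem_image.mp h1
    have := (Finset.mem_powersetCard.mp h2).2
    simp at this
  have hcount : aCount A 1 = T.card := by
    unfold aCount
    congr 1
    ext i
    simp only [hT, Finset.mem_filter, Finset.mem_univ, true_and]
    exact ⟨fun h => by rw [h]; rfl, fun h => funext fun j => by rw [Subsingleton.elim j 0]; exact h⟩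
  rw [Mcode, hset, Set.ncard_coe_finset, Finset.card_image_of_injective _ (cS_inj A), hSS,
    Finset.card_union_of_disjoint hdisj,
    Finset.card_image_of_injective _ Finset.singleton_injective, Finset.card_univ,
    Fintype.card_fin, Finset.card_powersetCard, hcount]
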